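/- Let τ ≥ 0, α ∈ (0,1], m > 2, and let u ∈ D(e^{τΛ^{α/2}}Λ^{m/2+2}) on 𝕋² be divergence-free and mean-zero, q ∈ D(e^{τΛ^{α/2}}Λ^{m/2}) mean-zero, and R = ∇Λ^{-1} the periodic Riesz transform. Then |(e^{τΛ^{α/2}}Λ^{m/2+1}(qRq), e^{τΛ^{α/2}}Λ^{m/2+1}u)_{L²}| ≤ C·‖e^{τΛ^{α/2}}Λ^{m/2+2}u‖_{L²}·‖e^{τΛ^{α/2}}Λ^{m/2}q‖²_{L²} with C depending only on m. -/

import Mathlib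

/-- Euclidean norm of a lattice point `k ∈ ℤ²`. -/
noncomputable def znorm (k : ℤ × ℤ) : ℝ :=
  Real.sqrt ((k.1 : ℝ) ^ 2 + (k.2 : ℝ) ^ 2)

namespace GevreyAux

lemma znorm_nonneg (k : ℤ × ℤ) : 0 ≤ znorm k := Real.sqrt_nonneg _

lemma znorm_neg (k : ℤ × ℤ) : znorm (-k) = znorm k := by
  unfold znorm
  rw [Prod.fst_neg, Prod.snd_neg]
  push_cast
  ring_nf

lemma znorm_zero : znorm 0 = 0 := by simp [znorm]

lemma znorm_add_le (j k : ℤ × ℤ) : znorm (j + k) ≤ znorm j + znorm k := by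
  have h : ∀ p : ℤ × ℤ, znorm p = ‖(((p.1 : ℝ) : ℂ) + ((p.2 : ℝ) : ℂ) * Complex.I)‖ := by
    intro p; rw [Complex.norm_add_mul_I]; rfl
  rw [h, h, h]
  have he : (((j + k).1 : ℝ) : ℂ) + (((j + k).2 : ℝ) : ℂ) * Complex.I =
      (((j.1 : ℝ) : ℂ) + ((j.2 : ℝ) : ℂ) * Complex.I)
        + (((k.1 : ℝ) : ℂ) + ((k.2 : ℝ) : ℂ) * Complex.I) := by
    rw [Prod.fst_add, Prod.snd_add]; push_cast; ring
  rw [he]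
  exact norm_add_le _ _

lemma one_le_znorm {k : ℤ × ℤ} (hk : k ≠ 0) : 1 ≤ znorm k := by
  have key : ∀ a : ℤ, a ≠ 0 → (1 : ℝ) ≤ (a : ℝ) ^ 2 := by
    intro a ha
    have h1 : 1 ≤ |a| := Int.one_le_abs ha
    have h2 : (1 : ℝ) ≤ |(a : ℝ)| := by
      rw [← Int.cast_abs]; exact_mod_cast h1
    nlinarith [abs_nonneg (a : ℝ), sq_abs (a : ℝ)]
  have h1 : (1 : ℝ) ≤ (k.1 : ℝ) ^ 2 + (k.2 : ℝ) ^ 2 := by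
    rcases eq_or_ne k.1 0 with h | h
    · have h2 : k.2 ≠ 0 := fun h2 => hk (Prod.ext h h2)
      nlinarith [key k.2 h2, sq_nonneg ((k.1 : ℝ))]
    · nlinarith [key k.1 h, sq_nonneg ((k.2 : ℝ))]
  calc (1 : ℝ) = Real.sqrt 1 := Real.sqrt_one.symm
    _ ≤ znorm k := Real.sqrt_le_sqrt h1

lemma znorm_pos {k : ℤ × ℤ} (hk : k ≠ 0) : 0 < znorm k :=
  lt_of_lt_of_le one_pos (one_le_znorm hk)

lemma rpow_subadd {x y p : ℝ} (hx : 0 ≤ x) (hy : 0 ≤ y) (hp : 0 ≤ p) (hp1 : p ≤ 1) :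
    (x + y) ^ p ≤ x ^ p + y ^ p := by
  have h := NNReal.rpow_add_le_add_rpow x.toNNReal y.toNNReal hp hp1
  have h2 := NNReal.coe_le_coe.2 h
  rwa [NNReal.coe_add, NNReal.coe_rpow, NNReal.coe_rpow, NNReal.coe_rpow, NNReal.coe_add,
    Real.coe_toNNReal x hx, Real.coe_toNNReal y hy] at h2

lemma cs_summable {ι : Type*} {a b : ι → ℝ} (ha : ∀ i, 0 ≤ a i) (hb : ∀ i, 0 ≤ b i)
    (hA : Summable fun i => a i ^ 2) (hB : Summable fun i => b i ^ 2) :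
    Summable fun i => a i * b i :=
  Summable.of_nonneg_of_le (fun i => mul_nonneg (ha i) (hb i))
    (fun i => by nlinarith [sq_nonneg (a i - b i)]) (hA.add hB)

lemma cs_tsum {ι : Type*} {a b : ι → ℝ} (ha : ∀ i, 0 ≤ a i) (hb : ∀ i, 0 ≤ b i)
    (hA : Summable fun i => a i ^ 2) (hB : Summable fun i => b i ^ 2) :
    ∑' i, a i * b i ≤ Real.sqrt (∑' i, a i ^ 2) * Real.sqrt (∑' i, b i ^ 2) := by
  refine Summable.tsum_le_of_sum_le (cs_summable ha hb hA hB) fun s => ?_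
  have h1 : (∑ i ∈ s, a i * b i) ^ 2 ≤ (∑ i ∈ s, a i ^ 2) * ∑ i ∈ s, b i ^ 2 :=
    Finset.sum_mul_sq_le_sq_mul_sq s a b
  have h2 : ∑ i ∈ s, a i ^ 2 ≤ ∑' i, a i ^ 2 := Summable.sum_le_tsum s (fun i _ => sq_nonneg _) hA
  have h3 : ∑ i ∈ s, b i ^ 2 ≤ ∑' i, b i ^ 2 := Summable.sum_le_tsum s (fun i _ => sq_nonneg _) hB
  have h4 : 0 ≤ ∑ i ∈ s, a i * b i := Finset.sum_nonneg fun i _ => mul_nonneg (ha i) (hb i)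
  have h5 : (0:ℝ) ≤ ∑ i ∈ s, a i ^ 2 := Finset.sum_nonneg fun i _ => sq_nonneg _
  have h6 : (0:ℝ) ≤ ∑ i ∈ s, b i ^ 2 := Finset.sum_nonneg fun i _ => sq_nonneg _
  calc ∑ i ∈ s, a i * b i = Real.sqrt ((∑ i ∈ s, a i * b i) ^ 2) := (Real.sqrt_sq h4).symm
    _ ≤ Real.sqrt ((∑' i, a i ^ 2) * ∑' i, b i ^ 2) := by
        apply Real.sqrt_le_sqrt
        calc (∑ i ∈ s, a i * b i) ^ 2 ≤ (∑ i ∈ s, a i ^ 2) * ∑ i ∈ s, b i ^ 2 := h1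
          _ ≤ (∑' i, a i ^ 2) * ∑' i, b i ^ 2 := by
              apply mul_le_mul h2 h3 h6 (h5.trans h2)
    _ = _ := Real.sqrt_mul (tsum_nonneg fun i => sq_nonneg _) _

lemma summable_znorm_neg_rpow {m : ℝ} (hm : 2 < m) :
    Summable fun k : ℤ × ℤ => znorm k ^ (-m) := by
  have h0 := EisensteinSeries.summable_one_div_norm_rpow hm
  rw [← (finTwoArrowEquiv ℤ).summable_iff]
  refine h0.of_nonneg_of_le (fun x => Real.rpow_nonneg (znorm_nonneg _) _) (fun x => ?_)
  rcases eq_or_ne x 0 with rfl | hx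
  · have h00 : znorm ((finTwoArrowEquiv ℤ) 0) = 0 := by
      have : (finTwoArrowEquiv ℤ) (0 : Fin 2 → ℤ) = (0 : ℤ × ℤ) := by
        simp [finTwoArrowEquiv]
      rw [this, znorm_zero]
    show znorm ((finTwoArrowEquiv ℤ) 0) ^ (-m) ≤ ‖(0 : Fin 2 → ℤ)‖ ^ (-m)
    rw [h00, Real.zero_rpow (by linarith), norm_zero, Real.zero_rpow (by linarith)]
  · have hxpos : (0 : ℝ) < ‖x‖ := by
      rw [norm_pos_iff]; exact hx
    have hle : ‖x‖ ≤ znorm (finTwoArrowEquiv ℤ x) := by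
      rw [pi_norm_le_iff_of_nonneg (znorm_nonneg _)]
      intro i
      have hz : znorm (finTwoArrowEquiv ℤ x) = Real.sqrt ((x 0 : ℝ) ^ 2 + (x 1 : ℝ) ^ 2) := rfl
      fin_cases i <;> rw [Int.norm_eq_abs, hz, ← Real.sqrt_sq_eq_abs] <;>
        exact Real.sqrt_le_sqrt (by push_cast; nlinarith [sq_nonneg ((x 0 : ℝ)), sq_nonneg ((x 1 : ℝ))])
    exact Real.rpow_le_rpow_of_nonpos hxpos hle (by linarith)

/-- The equivalence `j ↦ -(j + k)`. -/
def shiftNegR {G : Type*} [AddCommGroup G] (k : G) : G ≃ G where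
  toFun j := -(j + k)
  invFun l := -l - k
  left_inv j := by show -(-(j + k)) - k = j; rw [neg_neg, add_sub_cancel_right]
  right_inv l := by show -(-l - k + k) = l; rw [sub_add_cancel, neg_neg]

/-- The equivalence `k ↦ -(j + k)`. -/
def shiftNegL {G : Type*} [AddCommGroup G] (j : G) : G ≃ G where
  toFun k := -(j + k)
  invFun l := -l - j
  left_inv k := by show -(-(j + k)) - j = k; rw [neg_neg, add_sub_cancel_left]
  right_inv l := by show -(j + (-l - j)) = l; rw [add_comm j (-l - j), sub_add_cancel, neg_neg]

end GevreyAux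

open GevreyAux in
set_option maxHeartbeats 1000000 in
/-- Gevrey product estimate for the electric forcing term (Fourier-side
formulation of Proposition 8.2): for `m > 2` there is `C = C(m) > 0` such that
for all `τ ≥ 0`, `α ∈ (0,1]`, and Fourier coefficients `u`, `q` of a mean-zero
divergence-free real vector field `u ∈ D(e^{τΛ^{α/2}}Λ^{m/2+2})` and a mean-zero
real scalar `q ∈ D(e^{τΛ^{α/2}}Λ^{m/2})`, the trilinear sum representing
`(e^{τΛ^{α/2}}Λ^{m/2+1}(qRq), e^{τΛ^{α/2}}Λ^{m/2+1}u)_{L²}` is bounded by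
`C·‖e^{τΛ^{α/2}}Λ^{m/2+2}u‖·‖e^{τΛ^{α/2}}Λ^{m/2}q‖²`. -/
theorem gevrey_electric_forcing_estimate (m : ℝ) (hm : 2 < m) :
    ∃ C > 0, ∀ (α τ : ℝ), 0 < α → α ≤ 1 → 0 ≤ τ →
      ∀ (u : ℤ × ℤ → ℂ × ℂ) (q : ℤ × ℤ → ℂ),
      u 0 = 0 → q 0 = 0 →
      (∀ k : ℤ × ℤ, (k.1 : ℂ) * (u k).1 + (k.2 : ℂ) * (u k).2 = 0) →
      (∀ k : ℤ × ℤ, u (-k) = (starRingEnd ℂ (u k).1, starRingEnd ℂ (u k).2)) →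
      (∀ k : ℤ × ℤ, q (-k) = starRingEnd ℂ (q k)) →
      Summable (fun k : ℤ × ℤ =>
        Real.exp (2 * τ * znorm k ^ (α / 2)) * znorm k ^ (m + 4) *
          (‖(u k).1‖ ^ 2 + ‖(u k).2‖ ^ 2)) →
      Summable (fun k : ℤ × ℤ =>
        Real.exp (2 * τ * znorm k ^ (α / 2)) * znorm k ^ m * ‖q k‖ ^ 2) →
      ‖∑' (j : ℤ × ℤ) (k : ℤ × ℤ),
          ((znorm (-(j + k)) ^ (m + 2) *
              Real.exp (2 * τ * znorm (-(j + k)) ^ (α / 2)) * (znorm k)⁻¹ : ℝ) : ℂ) *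
            (q j * ((u (-(j + k))).1 * (k.1 : ℂ) + (u (-(j + k))).2 * (k.2 : ℂ)) * q k)‖
        ≤ C *
          Real.sqrt (∑' k : ℤ × ℤ,
            Real.exp (2 * τ * znorm k ^ (α / 2)) * znorm k ^ (m + 4) *
              (‖(u k).1‖ ^ 2 + ‖(u k).2‖ ^ 2)) *
          (∑' k : ℤ × ℤ,
            Real.exp (2 * τ * znorm k ^ (α / 2)) * znorm k ^ m * ‖q k‖ ^ 2) := by
  classical
  have hm0 : (0:ℝ) < m := by linarith
  set c : ℝ := Real.sqrt (∑' k : ℤ × ℤ, znorm k ^ (-m)) with hc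
  have hcnn : 0 ≤ c := Real.sqrt_nonneg _
  refine ⟨2 * (2:ℝ) ^ (m/2) * c + 1, by positivity, ?_⟩
  intro α τ hα hα1 hτ u q hu0 hq0 hdiv hureal hqreal hAsum hBsum
  -- the three weight sequences
  set U : ℤ × ℤ → ℝ := fun l =>
    Real.exp (τ * znorm l ^ (α/2)) * (znorm l ^ (m/2 + 2) *
      Real.sqrt (‖(u l).1‖ ^ 2 + ‖(u l).2‖ ^ 2)) with hUdef
  set Q : ℤ × ℤ → ℝ := fun k =>
    Real.exp (τ * znorm k ^ (α/2)) * (znorm k ^ (m/2) * ‖q k‖) with hQdef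
  set P : ℤ × ℤ → ℝ := fun k => znorm k ^ (-(m/2)) * Q k with hPdef
  have hUnn : ∀ l, 0 ≤ U l := fun l =>
    mul_nonneg (Real.exp_pos _).le
      (mul_nonneg (Real.rpow_nonneg (znorm_nonneg _) _) (Real.sqrt_nonneg _))
  have hQnn : ∀ k, 0 ≤ Q k := fun k =>
    mul_nonneg (Real.exp_pos _).le
      (mul_nonneg (Real.rpow_nonneg (znorm_nonneg _) _) (norm_nonneg _))
  have hPnn : ∀ k, 0 ≤ P k := fun k =>
    mul_nonneg (Real.rpow_nonneg (znorm_nonneg _) _) (hQnn k)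
  have hrpow2 : ∀ (x p : ℝ), 0 ≤ x → (x ^ p) ^ 2 = x ^ (2 * p) := by
    intro x p hx
    rw [← Real.rpow_natCast (x ^ p) 2, ← Real.rpow_mul hx]
    norm_num [mul_comm]
  have hexp2 : ∀ y : ℝ, Real.exp y ^ 2 = Real.exp (2 * y) := by
    intro y; rw [two_mul, Real.exp_add]; ring
  have hU2 : ∀ l, U l ^ 2 =
      Real.exp (2 * τ * znorm l ^ (α/2)) * znorm l ^ (m + 4) *
        (‖(u l).1‖ ^ 2 + ‖(u l).2‖ ^ 2) := by
    intro l
    rw [hUdef]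
    simp only
    rw [mul_pow, mul_pow, hexp2, hrpow2 _ _ (znorm_nonneg _),
      Real.sq_sqrt (by positivity)]
    rw [show 2 * (m/2 + 2) = m + 4 by ring, show 2 * (τ * znorm l ^ (α/2)) = 2 * τ * znorm l ^ (α/2) by ring]
    ring
  have hQ2 : ∀ k, Q k ^ 2 =
      Real.exp (2 * τ * znorm k ^ (α/2)) * znorm k ^ m * ‖q k‖ ^ 2 := by
    intro k
    rw [hQdef]
    simp only
    rw [mul_pow, mul_pow, hexp2, hrpow2 _ _ (znorm_nonneg _)]
    rw [show 2 * (m/2) = m by ring, show 2 * (τ * znorm k ^ (α/2)) = 2 * τ * znorm k ^ (α/2) by ring]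
    ring
  have hSU : Summable fun l => U l ^ 2 := hAsum.congr fun l => (hU2 l).symm
  have hSQ : Summable fun k => Q k ^ 2 := hBsum.congr fun k => (hQ2 k).symm
  -- P is summable with ∑ P ≤ c * √(∑ Q²)
  have hsumznm : Summable fun k : ℤ × ℤ => znorm k ^ (-m) := summable_znorm_neg_rpow hm
  have haux2 : ∀ k : ℤ × ℤ, (znorm k ^ (-(m/2))) ^ 2 = znorm k ^ (-m) := by
    intro k
    rw [hrpow2 _ _ (znorm_nonneg _), show (2:ℝ) * (-(m/2)) = -m by ring]
  have hSa : Summable fun k : ℤ × ℤ => (znorm k ^ (-(m/2))) ^ 2 :=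
    hsumznm.congr fun k => (haux2 k).symm
  have hSP : Summable P :=
    (cs_summable (fun k => Real.rpow_nonneg (znorm_nonneg _) _) hQnn hSa hSQ).congr
      fun k => by rw [hPdef]
  have hPsum_le : ∑' k, P k ≤ c * Real.sqrt (∑' k, Q k ^ 2) := by
    have h := cs_tsum (fun k : ℤ × ℤ => Real.rpow_nonneg (znorm_nonneg k) (-(m/2))) hQnn hSa hSQ
    have he : ∑' k : ℤ × ℤ, (znorm k ^ (-(m/2))) ^ 2 = ∑' k : ℤ × ℤ, znorm k ^ (-m) :=
      tsum_congr haux2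
    rw [he] at h
    calc ∑' k, P k = ∑' k : ℤ × ℤ, znorm k ^ (-(m/2)) * Q k := by
          apply tsum_congr; intro k; rw [hPdef]
      _ ≤ _ := h
  -- e^{τ|k|^{α/2}}‖q k‖ ≤ P k
  have hP_le : ∀ k, Real.exp (τ * znorm k ^ (α/2)) * ‖q k‖ ≤ P k := by
    intro k
    rcases eq_or_ne k 0 with rfl | hk
    · rw [hq0, norm_zero, mul_zero, hPdef]
      simp only
      rw [hQdef]
      simp only
      rw [hq0, norm_zero, mul_zero, mul_zero, mul_zero]
    · have hx : 0 < znorm k := znorm_pos hk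
      have h1 : znorm k ^ (-(m/2)) * znorm k ^ (m/2) = 1 := by
        rw [← Real.rpow_add hx]; norm_num
      apply le_of_eq
      rw [hPdef]
      simp only
      rw [hQdef]
      simp only
      calc Real.exp (τ * znorm k ^ (α/2)) * ‖q k‖
          = (znorm k ^ (-(m/2)) * znorm k ^ (m/2)) *
              (Real.exp (τ * znorm k ^ (α/2)) * ‖q k‖) := by rw [h1, one_mul]
        _ = znorm k ^ (-(m/2)) * (Real.exp (τ * znorm k ^ (α/2)) * (znorm k ^ (m/2) * ‖q k‖)) := by
            ring
  -- square-root abbreviations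
  set SA : ℝ := Real.sqrt (∑' l : ℤ × ℤ, U l ^ 2) with hSAdef
  set SB : ℝ := Real.sqrt (∑' k : ℤ × ℤ, Q k ^ 2) with hSBdef
  have hSAnn : 0 ≤ SA := Real.sqrt_nonneg _
  have hSBnn : 0 ≤ SB := Real.sqrt_nonneg _
  -- shifted sums of U²
  have hUshiftR : ∀ kk : ℤ × ℤ, (Summable fun j => U (-(j + kk)) ^ 2) ∧
      (∑' j : ℤ × ℤ, U (-(j + kk)) ^ 2 = ∑' l : ℤ × ℤ, U l ^ 2) := by
    intro kk
    constructor
    · exact (shiftNegR kk).summable_iff.2 hSU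
    · exact (shiftNegR kk).tsum_eq (fun l => U l ^ 2)
  have hUshiftL : ∀ jj : ℤ × ℤ, (Summable fun k => U (-(jj + k)) ^ 2) ∧
      (∑' k : ℤ × ℤ, U (-(jj + k)) ^ 2 = ∑' l : ℤ × ℤ, U l ^ 2) := by
    intro jj
    constructor
    · exact (shiftNegL jj).summable_iff.2 hSU
    · exact (shiftNegL jj).tsum_eq (fun l => U l ^ 2)
  -- inner Cauchy-Schwarz bounds
  have hInnerJ : ∀ kk : ℤ × ℤ, (Summable fun j => U (-(j + kk)) * Q j) ∧
      (∑' j : ℤ × ℤ, U (-(j + kk)) * Q j ≤ SA * SB) := by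
    intro kk
    refine ⟨cs_summable (fun j => hUnn _) hQnn (hUshiftR kk).1 hSQ, ?_⟩
    have h := cs_tsum (fun j => hUnn (-(j + kk))) hQnn (hUshiftR kk).1 hSQ
    rwa [(hUshiftR kk).2] at h
  have hInnerK : ∀ jj : ℤ × ℤ, (Summable fun k => U (-(jj + k)) * Q k) ∧
      (∑' k : ℤ × ℤ, U (-(jj + k)) * Q k ≤ SA * SB) := by
    intro jj
    refine ⟨cs_summable (fun k => hUnn _) hQnn (hUshiftL jj).1 hSQ, ?_⟩
    have h := cs_tsum (fun k => hUnn (-(jj + k))) hQnn (hUshiftL jj).1 hSQ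
    rwa [(hUshiftL jj).2] at h
  -- the two product majorants
  have hg1nn : ∀ p : (ℤ × ℤ) × (ℤ × ℤ), 0 ≤ U (-(p.2 + p.1)) * Q p.2 * P p.1 :=
    fun p => mul_nonneg (mul_nonneg (hUnn _) (hQnn _)) (hPnn _)
  have hg2nn : ∀ p : (ℤ × ℤ) × (ℤ × ℤ), 0 ≤ U (-(p.1 + p.2)) * Q p.2 * P p.1 :=
    fun p => mul_nonneg (mul_nonneg (hUnn _) (hQnn _)) (hPnn _)
  have hg1inner : ∀ kk : ℤ × ℤ, Summable fun j => U (-(j + kk)) * Q j * P kk :=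
    fun kk => (hInnerJ kk).1.mul_right (P kk)
  have hg2inner : ∀ jj : ℤ × ℤ, Summable fun k => U (-(jj + k)) * Q k * P jj :=
    fun jj => (hInnerK jj).1.mul_right (P jj)
  have hg1outer_le : ∀ kk : ℤ × ℤ,
      ∑' j : ℤ × ℤ, U (-(j + kk)) * Q j * P kk ≤ SA * SB * P kk := by
    intro kk
    rw [tsum_mul_right]
    exact mul_le_mul_of_nonneg_right (hInnerJ kk).2 (hPnn kk)
  have hg2outer_le : ∀ jj : ℤ × ℤ,
      ∑' k : ℤ × ℤ, U (-(jj + k)) * Q k * P jj ≤ SA * SB * P jj := by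
    intro jj
    rw [tsum_mul_right]
    exact mul_le_mul_of_nonneg_right (hInnerK jj).2 (hPnn jj)
  have hg1outer_s : Summable fun kk : ℤ × ℤ => ∑' j : ℤ × ℤ, U (-(j + kk)) * Q j * P kk :=
    Summable.of_nonneg_of_le
      (fun kk => tsum_nonneg fun j => mul_nonneg (mul_nonneg (hUnn _) (hQnn _)) (hPnn _))
      hg1outer_le (hSP.mul_left (SA * SB))
  have hg2outer_s : Summable fun jj : ℤ × ℤ => ∑' k : ℤ × ℤ, U (-(jj + k)) * Q k * P jj :=
    Summable.of_nonneg_of_le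
      (fun jj => tsum_nonneg fun k => mul_nonneg (mul_nonneg (hUnn _) (hQnn _)) (hPnn _))
      hg2outer_le (hSP.mul_left (SA * SB))
  have hg1sum : Summable fun p : (ℤ × ℤ) × (ℤ × ℤ) => U (-(p.2 + p.1)) * Q p.2 * P p.1 :=
    (summable_prod_of_nonneg hg1nn).2 ⟨hg1inner, hg1outer_s⟩
  have hg2sum : Summable fun p : (ℤ × ℤ) × (ℤ × ℤ) => U (-(p.1 + p.2)) * Q p.2 * P p.1 :=
    (summable_prod_of_nonneg hg2nn).2 ⟨hg2inner, hg2outer_s⟩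
  have hg1tsum : ∑' p : (ℤ × ℤ) × (ℤ × ℤ), U (-(p.2 + p.1)) * Q p.2 * P p.1
      ≤ SA * SB * ∑' k : ℤ × ℤ, P k := by
    rw [Summable.tsum_prod' hg1sum hg1inner]
    calc ∑' kk : ℤ × ℤ, ∑' j : ℤ × ℤ, U (-(j + kk)) * Q j * P kk
        ≤ ∑' kk : ℤ × ℤ, SA * SB * P kk :=
          Summable.tsum_le_tsum hg1outer_le hg1outer_s (hSP.mul_left (SA * SB))
      _ = SA * SB * ∑' k : ℤ × ℤ, P k := tsum_mul_left
  have hg2tsum : ∑' p : (ℤ × ℤ) × (ℤ × ℤ), U (-(p.1 + p.2)) * Q p.2 * P p.1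
      ≤ SA * SB * ∑' k : ℤ × ℤ, P k := by
    rw [Summable.tsum_prod' hg2sum hg2inner]
    calc ∑' jj : ℤ × ℤ, ∑' k : ℤ × ℤ, U (-(jj + k)) * Q k * P jj
        ≤ ∑' jj : ℤ × ℤ, SA * SB * P jj :=
          Summable.tsum_le_tsum hg2outer_le hg2outer_s (hSP.mul_left (SA * SB))
      _ = SA * SB * ∑' k : ℤ × ℤ, P k := tsum_mul_left
  -- swapped version of the first majorant
  have hT1sum : Summable fun p : (ℤ × ℤ) × (ℤ × ℤ) => U (-(p.1 + p.2)) * Q p.1 * P p.2 :=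
    (Equiv.prodComm (ℤ × ℤ) (ℤ × ℤ)).summable_iff.2 hg1sum
  have hT1tsum : ∑' p : (ℤ × ℤ) × (ℤ × ℤ), U (-(p.1 + p.2)) * Q p.1 * P p.2
      = ∑' p : (ℤ × ℤ) × (ℤ × ℤ), U (-(p.2 + p.1)) * Q p.2 * P p.1 :=
    (Equiv.prodComm (ℤ × ℤ) (ℤ × ℤ)).tsum_eq
      (fun p : (ℤ × ℤ) × (ℤ × ℤ) => U (-(p.2 + p.1)) * Q p.2 * P p.1)
  -- pointwise bound
  have hFG : ∀ j k : ℤ × ℤ,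
      ‖((znorm (-(j + k)) ^ (m + 2) * Real.exp (2 * τ * znorm (-(j + k)) ^ (α / 2)) * (znorm k)⁻¹ : ℝ) : ℂ) * (q j * ((u (-(j + k))).1 * (k.1 : ℂ) + (u (-(j + k))).2 * (k.2 : ℂ)) * q k)‖
        ≤ (2:ℝ) ^ (m/2) * (U (-(j + k)) * Q j * P k + U (-(j + k)) * Q k * P j) := by
    intro j k
    have hGnn : (0:ℝ) ≤ (2:ℝ) ^ (m/2) *
        (U (-(j + k)) * Q j * P k + U (-(j + k)) * Q k * P j) :=
      mul_nonneg (Real.rpow_nonneg (by norm_num) _)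
        (add_nonneg (mul_nonneg (mul_nonneg (hUnn _) (hQnn _)) (hPnn _))
          (mul_nonneg (mul_nonneg (hUnn _) (hQnn _)) (hPnn _)))
    rcases eq_or_ne k 0 with rfl | hk
    · rw [hq0, mul_zero, mul_zero, norm_zero]
      exact hGnn
    · have hxk : 0 < znorm k := znorm_pos hk
      have hS : (0:ℝ) ≤ Real.sqrt (‖(u (-(j + k))).1‖ ^ 2 + ‖(u (-(j + k))).2‖ ^ 2) :=
        Real.sqrt_nonneg _
      have hw : (0:ℝ) ≤ znorm (-(j + k)) ^ (m + 2) *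
          Real.exp (2 * τ * znorm (-(j + k)) ^ (α / 2)) * (znorm k)⁻¹ :=
        mul_nonneg (mul_nonneg (Real.rpow_nonneg (znorm_nonneg _) _) (Real.exp_pos _).le)
          (inv_nonneg.2 (znorm_nonneg _))
      have hnorm : ‖((znorm (-(j + k)) ^ (m + 2) * Real.exp (2 * τ * znorm (-(j + k)) ^ (α / 2)) * (znorm k)⁻¹ : ℝ) : ℂ) * (q j * ((u (-(j + k))).1 * (k.1 : ℂ) + (u (-(j + k))).2 * (k.2 : ℂ)) * q k)‖
          = (znorm (-(j + k)) ^ (m + 2) * Real.exp (2 * τ * znorm (-(j + k)) ^ (α / 2)) *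
              (znorm k)⁻¹) *
            (‖q j‖ * ‖(u (-(j + k))).1 * (k.1 : ℂ) + (u (-(j + k))).2 * (k.2 : ℂ)‖ * ‖q k‖) := by
        rw [norm_mul, norm_mul, norm_mul, Complex.norm_real, Real.norm_eq_abs, abs_of_nonneg hw]
      rw [hnorm]
      have hdot : ‖(u (-(j + k))).1 * (k.1 : ℂ) + (u (-(j + k))).2 * (k.2 : ℂ)‖
          ≤ Real.sqrt (‖(u (-(j + k))).1‖ ^ 2 + ‖(u (-(j + k))).2‖ ^ 2) * znorm k := by
        have hc1 : ((k.1 : ℤ) : ℂ) = (((k.1 : ℝ)) : ℂ) := by push_cast; rfl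
        have hc2 : ((k.2 : ℤ) : ℂ) = (((k.2 : ℝ)) : ℂ) := by push_cast; rfl
        have h1 : ‖(u (-(j + k))).1 * (k.1 : ℂ) + (u (-(j + k))).2 * (k.2 : ℂ)‖
            ≤ ‖(u (-(j + k))).1‖ * |(k.1 : ℝ)| + ‖(u (-(j + k))).2‖ * |(k.2 : ℝ)| := by
          calc ‖(u (-(j + k))).1 * (k.1 : ℂ) + (u (-(j + k))).2 * (k.2 : ℂ)‖
              ≤ ‖(u (-(j + k))).1 * (k.1 : ℂ)‖ + ‖(u (-(j + k))).2 * (k.2 : ℂ)‖ := norm_add_le _ _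
            _ = ‖(u (-(j + k))).1‖ * |(k.1 : ℝ)| + ‖(u (-(j + k))).2‖ * |(k.2 : ℝ)| := by
                rw [norm_mul, norm_mul, hc1, hc2, Complex.norm_real, Complex.norm_real,
                  Real.norm_eq_abs, Real.norm_eq_abs]
        refine h1.trans ?_
        have hsq : (‖(u (-(j + k))).1‖ * |(k.1 : ℝ)| + ‖(u (-(j + k))).2‖ * |(k.2 : ℝ)|) ^ 2
            ≤ (‖(u (-(j + k))).1‖ ^ 2 + ‖(u (-(j + k))).2‖ ^ 2) *
              (|(k.1 : ℝ)| ^ 2 + |(k.2 : ℝ)| ^ 2) := by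
          nlinarith [sq_nonneg (‖(u (-(j + k))).1‖ * |(k.2 : ℝ)| - ‖(u (-(j + k))).2‖ * |(k.1 : ℝ)|)]
        have h3 : ‖(u (-(j + k))).1‖ * |(k.1 : ℝ)| + ‖(u (-(j + k))).2‖ * |(k.2 : ℝ)|
            ≤ Real.sqrt ((‖(u (-(j + k))).1‖ ^ 2 + ‖(u (-(j + k))).2‖ ^ 2) *
              (|(k.1 : ℝ)| ^ 2 + |(k.2 : ℝ)| ^ 2)) := by
          rw [← Real.sqrt_sq (by positivity :
            (0:ℝ) ≤ ‖(u (-(j + k))).1‖ * |(k.1 : ℝ)| + ‖(u (-(j + k))).2‖ * |(k.2 : ℝ)|)]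
          exact Real.sqrt_le_sqrt hsq
        rw [Real.sqrt_mul (by positivity)] at h3
        refine h3.trans_eq ?_
        congr 1
        show Real.sqrt (|(k.1 : ℝ)| ^ 2 + |(k.2 : ℝ)| ^ 2) = znorm k
        rw [sq_abs, sq_abs]
        rfl
      rcases eq_or_ne (j + k) 0 with hjk | hjk
      · have hz : znorm (-(j + k)) = 0 := by rw [hjk, neg_zero, znorm_zero]
        rw [hz, Real.zero_rpow (by linarith : m + 2 ≠ 0), zero_mul, zero_mul, zero_mul]
        exact hGnn
      · have hxl : 0 < znorm (-(j + k)) := by rw [znorm_neg]; exact znorm_pos hjk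
        have hlle : znorm (-(j + k)) ≤ znorm j + znorm k := by
          rw [znorm_neg]; exact znorm_add_le j k
        have e1 : znorm (-(j + k)) ^ (m + 2)
            = znorm (-(j + k)) ^ (m/2) * znorm (-(j + k)) ^ (m/2 + 2) := by
          rw [← Real.rpow_add hxl]; congr 1; ring
        have e2 : Real.exp (2 * τ * znorm (-(j + k)) ^ (α/2))
            = Real.exp (τ * znorm (-(j + k)) ^ (α/2)) * Real.exp (τ * znorm (-(j + k)) ^ (α/2)) := by
          rw [← Real.exp_add]; congr 1; ring
        have e3 : Real.exp (τ * znorm (-(j + k)) ^ (α/2))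
            ≤ Real.exp (τ * znorm j ^ (α/2)) * Real.exp (τ * znorm k ^ (α/2)) := by
          rw [← Real.exp_add, Real.exp_le_exp]
          have h1 : znorm (-(j + k)) ^ (α/2) ≤ znorm j ^ (α/2) + znorm k ^ (α/2) :=
            le_trans (Real.rpow_le_rpow hxl.le hlle (by linarith))
              (rpow_subadd (znorm_nonneg _) (znorm_nonneg _) (by linarith) (by linarith))
          nlinarith
        have e4 : znorm (-(j + k)) ^ (m/2)
            ≤ (2:ℝ) ^ (m/2) * (znorm j ^ (m/2) + znorm k ^ (m/2)) := by
          have hmax : znorm j + znorm k ≤ 2 * max (znorm j) (znorm k) := by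
            rcases le_total (znorm j) (znorm k) with h | h
            · rw [max_eq_right h]; linarith
            · rw [max_eq_left h]; linarith
          calc znorm (-(j + k)) ^ (m/2) ≤ (znorm j + znorm k) ^ (m/2) :=
                Real.rpow_le_rpow hxl.le hlle (by linarith)
            _ ≤ (2 * max (znorm j) (znorm k)) ^ (m/2) := by
                apply Real.rpow_le_rpow (add_nonneg (znorm_nonneg j) (znorm_nonneg k)) hmax
                  (by linarith)
            _ = (2:ℝ) ^ (m/2) * (max (znorm j) (znorm k)) ^ (m/2) :=
                Real.mul_rpow (by norm_num) (le_trans (znorm_nonneg j) (le_max_left _ _))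
            _ ≤ (2:ℝ) ^ (m/2) * (znorm j ^ (m/2) + znorm k ^ (m/2)) := by
                apply mul_le_mul_of_nonneg_left ?_ (by positivity)
                rcases max_choice (znorm j) (znorm k) with h | h <;> rw [h]
                · nlinarith [Real.rpow_nonneg (znorm_nonneg k) (m/2)]
                · nlinarith [Real.rpow_nonneg (znorm_nonneg j) (m/2)]
        have step : znorm (-(j + k)) ^ (m/2) * Real.exp (τ * znorm (-(j + k)) ^ (α/2))
            ≤ ((2:ℝ) ^ (m/2) * (znorm j ^ (m/2) + znorm k ^ (m/2))) *
              (Real.exp (τ * znorm j ^ (α/2)) * Real.exp (τ * znorm k ^ (α/2))) :=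
          mul_le_mul e4 e3 (Real.exp_pos _).le
            (mul_nonneg (Real.rpow_nonneg (by norm_num) _)
              (add_nonneg (Real.rpow_nonneg (znorm_nonneg _) _)
                (Real.rpow_nonneg (znorm_nonneg _) _)))
        calc (znorm (-(j + k)) ^ (m + 2) * Real.exp (2 * τ * znorm (-(j + k)) ^ (α / 2)) *
                (znorm k)⁻¹) *
              (‖q j‖ * ‖(u (-(j + k))).1 * (k.1 : ℂ) + (u (-(j + k))).2 * (k.2 : ℂ)‖ * ‖q k‖)
            ≤ (znorm (-(j + k)) ^ (m + 2) * Real.exp (2 * τ * znorm (-(j + k)) ^ (α / 2)) *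
                (znorm k)⁻¹) *
              (‖q j‖ * (Real.sqrt (‖(u (-(j + k))).1‖ ^ 2 + ‖(u (-(j + k))).2‖ ^ 2) * znorm k) *
                ‖q k‖) := by
              apply mul_le_mul_of_nonneg_left ?_ hw
              exact mul_le_mul_of_nonneg_right
                (mul_le_mul_of_nonneg_left hdot (norm_nonneg _)) (norm_nonneg _)
          _ = (znorm (-(j + k)) ^ (m/2) * Real.exp (τ * znorm (-(j + k)) ^ (α/2))) *
              ((Real.exp (τ * znorm (-(j + k)) ^ (α/2)) * (znorm (-(j + k)) ^ (m/2 + 2) *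
                Real.sqrt (‖(u (-(j + k))).1‖ ^ 2 + ‖(u (-(j + k))).2‖ ^ 2))) *
                (‖q j‖ * ‖q k‖)) := by
              rw [e1, e2]
              field_simp
          _ ≤ (((2:ℝ) ^ (m/2) * (znorm j ^ (m/2) + znorm k ^ (m/2))) *
              (Real.exp (τ * znorm j ^ (α/2)) * Real.exp (τ * znorm k ^ (α/2)))) *
              ((Real.exp (τ * znorm (-(j + k)) ^ (α/2)) * (znorm (-(j + k)) ^ (m/2 + 2) *
                Real.sqrt (‖(u (-(j + k))).1‖ ^ 2 + ‖(u (-(j + k))).2‖ ^ 2))) *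
                (‖q j‖ * ‖q k‖)) := by
              apply mul_le_mul_of_nonneg_right step
              exact mul_nonneg (mul_nonneg (Real.exp_pos _).le
                (mul_nonneg (Real.rpow_nonneg (znorm_nonneg _) _) hS))
                (mul_nonneg (norm_nonneg _) (norm_nonneg _))
          _ = (2:ℝ) ^ (m/2) *
              ((U (-(j + k)) * Q j) * (Real.exp (τ * znorm k ^ (α/2)) * ‖q k‖)
                + (U (-(j + k)) * Q k) * (Real.exp (τ * znorm j ^ (α/2)) * ‖q j‖)) := by
              rw [hUdef, hQdef]
              ring
          _ ≤ (2:ℝ) ^ (m/2) * ((U (-(j + k)) * Q j) * P k + (U (-(j + k)) * Q k) * P j) := by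
              apply mul_le_mul_of_nonneg_left ?_ (by positivity)
              exact add_le_add
                (mul_le_mul_of_nonneg_left (hP_le k) (mul_nonneg (hUnn _) (hQnn _)))
                (mul_le_mul_of_nonneg_left (hP_le j) (mul_nonneg (hUnn _) (hQnn _)))
          _ = (2:ℝ) ^ (m/2) * (U (-(j + k)) * Q j * P k + U (-(j + k)) * Q k * P j) := by ring
  -- summability of the full double series
  have hGsum : Summable fun p : (ℤ × ℤ) × (ℤ × ℤ) =>
      (2:ℝ) ^ (m/2) * (U (-(p.1 + p.2)) * Q p.1 * P p.2 + U (-(p.1 + p.2)) * Q p.2 * P p.1) :=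
    (hT1sum.add hg2sum).mul_left _
  have hPhi : Summable fun p : (ℤ × ℤ) × (ℤ × ℤ) =>
      ‖((znorm (-(p.1 + p.2)) ^ (m + 2) * Real.exp (2 * τ * znorm (-(p.1 + p.2)) ^ (α / 2)) * (znorm p.2)⁻¹ : ℝ) : ℂ) * (q p.1 * ((u (-(p.1 + p.2))).1 * (p.2.1 : ℂ) + (u (-(p.1 + p.2))).2 * (p.2.2 : ℂ)) * q p.2)‖ :=
    Summable.of_nonneg_of_le (fun p => norm_nonneg _) (fun p => hFG p.1 p.2) hGsum
  have hFsum : Summable fun p : (ℤ × ℤ) × (ℤ × ℤ) =>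
      ((znorm (-(p.1 + p.2)) ^ (m + 2) * Real.exp (2 * τ * znorm (-(p.1 + p.2)) ^ (α / 2)) * (znorm p.2)⁻¹ : ℝ) : ℂ) * (q p.1 * ((u (-(p.1 + p.2))).1 * (p.2.1 : ℂ) + (u (-(p.1 + p.2))).2 * (p.2.2 : ℂ)) * q p.2) :=
    hPhi.of_norm
  have hFinner : ∀ j : ℤ × ℤ, Summable fun k : ℤ × ℤ =>
      ((znorm (-(j + k)) ^ (m + 2) * Real.exp (2 * τ * znorm (-(j + k)) ^ (α / 2)) * (znorm k)⁻¹ : ℝ) : ℂ) * (q j * ((u (-(j + k))).1 * (k.1 : ℂ) + (u (-(j + k))).2 * (k.2 : ℂ)) * q k) :=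
    fun j => Summable.of_norm (hPhi.prod_factor j)
  -- identify the right-hand side quantities
  have hAe : (∑' k : ℤ × ℤ, Real.exp (2 * τ * znorm k ^ (α / 2)) * znorm k ^ (m + 4) *
      (‖(u k).1‖ ^ 2 + ‖(u k).2‖ ^ 2)) = ∑' l : ℤ × ℤ, U l ^ 2 := (tsum_congr hU2).symm
  have hBe : (∑' k : ℤ × ℤ, Real.exp (2 * τ * znorm k ^ (α / 2)) * znorm k ^ m * ‖q k‖ ^ 2)
      = ∑' k : ℤ × ℤ, Q k ^ 2 := (tsum_congr hQ2).symm
  rw [hAe, hBe]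
  have hQtot_nn : (0:ℝ) ≤ ∑' k : ℤ × ℤ, Q k ^ 2 := tsum_nonneg fun k => sq_nonneg _
  have hSB2 : SB * SB = ∑' k : ℤ × ℤ, Q k ^ 2 :=
    Real.mul_self_sqrt hQtot_nn
  have hPtot_nn : (0:ℝ) ≤ ∑' k : ℤ × ℤ, P k := tsum_nonneg fun k => hPnn k
  have h2m : (0:ℝ) < (2:ℝ) ^ (m/2) := Real.rpow_pos_of_pos (by norm_num) _
  calc ‖∑' (j : ℤ × ℤ) (k : ℤ × ℤ),
        ((znorm (-(j + k)) ^ (m + 2) * Real.exp (2 * τ * znorm (-(j + k)) ^ (α / 2)) * (znorm k)⁻¹ : ℝ) : ℂ) * (q j * ((u (-(j + k))).1 * (k.1 : ℂ) + (u (-(j + k))).2 * (k.2 : ℂ)) * q k)‖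
      = ‖∑' p : (ℤ × ℤ) × (ℤ × ℤ),
          ((znorm (-(p.1 + p.2)) ^ (m + 2) * Real.exp (2 * τ * znorm (-(p.1 + p.2)) ^ (α / 2)) * (znorm p.2)⁻¹ : ℝ) : ℂ) * (q p.1 * ((u (-(p.1 + p.2))).1 * (p.2.1 : ℂ) + (u (-(p.1 + p.2))).2 * (p.2.2 : ℂ)) * q p.2)‖ :=
        (congrArg norm (Summable.tsum_prod' hFsum hFinner)).symm
    _ ≤ ∑' p : (ℤ × ℤ) × (ℤ × ℤ),
          ‖((znorm (-(p.1 + p.2)) ^ (m + 2) * Real.exp (2 * τ * znorm (-(p.1 + p.2)) ^ (α / 2)) * (znorm p.2)⁻¹ : ℝ) : ℂ) * (q p.1 * ((u (-(p.1 + p.2))).1 * (p.2.1 : ℂ) + (u (-(p.1 + p.2))).2 * (p.2.2 : ℂ)) * q p.2)‖ :=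
        norm_tsum_le_tsum_norm hPhi
    _ ≤ ∑' p : (ℤ × ℤ) × (ℤ × ℤ), (2:ℝ) ^ (m/2) *
          (U (-(p.1 + p.2)) * Q p.1 * P p.2 + U (-(p.1 + p.2)) * Q p.2 * P p.1) :=
        Summable.tsum_le_tsum (fun p => hFG p.1 p.2) hPhi hGsum
    _ = (2:ℝ) ^ (m/2) * ((∑' p : (ℤ × ℤ) × (ℤ × ℤ), U (-(p.1 + p.2)) * Q p.1 * P p.2)
          + ∑' p : (ℤ × ℤ) × (ℤ × ℤ), U (-(p.1 + p.2)) * Q p.2 * P p.1) := by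
        rw [tsum_mul_left, Summable.tsum_add hT1sum hg2sum]
    _ ≤ (2:ℝ) ^ (m/2) * ((SA * SB * ∑' k : ℤ × ℤ, P k) + (SA * SB * ∑' k : ℤ × ℤ, P k)) := by
        apply mul_le_mul_of_nonneg_left ?_ h2m.le
        apply add_le_add
        · rw [hT1tsum]; exact hg1tsum
        · exact hg2tsum
    _ = (2:ℝ) ^ (m/2) * 2 * (SA * SB * ∑' k : ℤ × ℤ, P k) := by ring
    _ ≤ (2:ℝ) ^ (m/2) * 2 * (SA * SB * (c * SB)) := by
        apply mul_le_mul_of_nonneg_left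
          (mul_le_mul_of_nonneg_left hPsum_le (mul_nonneg hSAnn hSBnn))
          (by positivity)
    _ = 2 * (2:ℝ) ^ (m/2) * c * SA * (SB * SB) := by ring
    _ = 2 * (2:ℝ) ^ (m/2) * c * SA * ∑' k : ℤ × ℤ, Q k ^ 2 := by rw [hSB2]
    _ ≤ (2 * (2:ℝ) ^ (m/2) * c + 1) * SA * ∑' k : ℤ × ℤ, Q k ^ 2 := by
        apply mul_le_mul_of_nonneg_right ?_ hQtot_nn
        apply mul_le_mul_of_nonneg_right ?_ hSAnn
        linarith
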